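/- Let a, b, c, d ∈ ℝ with a ≥ 0, c ≥ 0, a·c = b² + d², and a + c ≥ κ > 0. Define A(t) = (1/4)c t² + b t + a and C(t) = c. Then for all t ≥ 0, A(t) + C(t) ≥ κ e^{-t/2}. -/

import Mathlib

open Real

/-- Pointwise Grönwall-type lower bound: if `a, c ≥ 0`, `a·c = b² + d²` and
`a + c ≥ κ > 0`, then `A(t) + C(t) ≥ κ e^{-t/2}` for all `t ≥ 0`. -/
theorem pointwise_gronwall_lower_bound (a b c d κ : ℝ)
    (ha : 0 ≤ a) (hc : 0 ≤ c) (hrel : a * c = b ^ 2 + d ^ 2)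
    (hκ : 0 < κ) (hκ' : κ ≤ a + c) :
    ∀ t : ℝ, 0 ≤ t →
      κ * Real.exp (-t / 2) ≤ ((1/4) * c * t ^ 2 + b * t + a) + c := by
  intro t ht
  set f : ℝ → ℝ := fun s => (1/4) * c * s ^ 2 + b * s + a + c with hfdef
  set g : ℝ → ℝ := fun s => f s * Real.exp (s / 2) with hgdef
  -- derivative of f
  have hf : ∀ s : ℝ, HasDerivAt f ((1/2) * c * s + b) s := by
    intro s
    have h1 : HasDerivAt (fun s : ℝ => (1/4) * c * s ^ 2) ((1/4) * c * (2 * s)) s := by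
      simpa using (hasDerivAt_pow 2 s).const_mul ((1/4) * c)
    have h2 : HasDerivAt (fun s : ℝ => b * s) b s := by
      simpa using (hasDerivAt_id s).const_mul b
    have := ((h1.add h2).add_const a).add_const c
    exact this.congr_deriv (by ring)
  -- derivative of exp(s/2)
  have hexp : ∀ s : ℝ, HasDerivAt (fun s : ℝ => Real.exp (s / 2))
      (Real.exp (s / 2) * (1/2)) s := by
    intro s
    have h := (Real.hasDerivAt_exp (s / 2)).comp s ((hasDerivAt_id s).div_const 2)
    simpa [div_eq_mul_inv, mul_comm, Function.comp_def] using h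
  have hg : ∀ s : ℝ, HasDerivAt g
      (Real.exp (s / 2) * (((1/2) * c * s + b) + f s * (1/2))) s := by
    intro s
    have := (hf s).mul (hexp s)
    exact this.congr_deriv (by ring)
  -- the derivative of g is nonneg
  have hkey : ∀ s : ℝ, 0 ≤ ((1/2) * c * s + b) + f s * (1/2) := by
    intro s
    simp only [hfdef]
    rcases eq_or_lt_of_le hc with hc0 | hc0
    · have hb : b = 0 := by nlinarith [sq_nonneg b, sq_nonneg d]
      rw [← hc0, hb]
      nlinarith
    · nlinarith [sq_nonneg (c * s + 2 * b + 2 * c), sq_nonneg d, hc0]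
  have hmono : Monotone g := by
    apply monotone_of_deriv_nonneg
    · exact fun s => (hg s).differentiableAt
    · intro s
      rw [(hg s).deriv]
      exact mul_nonneg (Real.exp_pos _).le (hkey s)
  have h0 : g 0 = a + c := by simp [hgdef, hfdef]
  have hgt : a + c ≤ g t := by
    rw [← h0]; exact hmono ht
  have hft : κ ≤ f t * Real.exp (t / 2) := le_trans hκ' hgt
  have := mul_le_mul_of_nonneg_right hft (Real.exp_pos (-t / 2)).le
  have hE : Real.exp (t / 2) * Real.exp (-t / 2) = 1 := by
    rw [← Real.exp_add, show t / 2 + -t / 2 = 0 by ring, Real.exp_zero]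
  calc κ * Real.exp (-t / 2) ≤ f t * Real.exp (t / 2) * Real.exp (-t / 2) := this
    _ = f t := by rw [mul_assoc, hE, mul_one]
    _ = ((1/4) * c * t ^ 2 + b * t + a) + c := by simp only [hfdef]
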